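/- arXiv:2203.09097 — 2 statements merged into one kernel-verified Lean document; each statement's English description precedes it below -/
import Mathlib

section
/- Let Ω ⊆ ℝ² be a measurable set and let 1 < α < 2. For all w₁, w₂ ∈ L²(Ω), the functions |w₁|^{2/α} and |w₂|^{2/α} belong to L^α(Ω) and one has ∫_Ω | |w₁(x)|^{2/α} − |w₂(x)|^{2/α} |^α dx ≤ ‖w₁ − w₂‖_{L²(Ω)} · ( ‖w₁‖_{L²(Ω)} + ‖w₂‖_{L²(Ω)} ). -/
open MeasureTheory
open scoped NNReal ENNReal

private lemma rpow_sub_le' {u v p : ℝ} (hv : 0 ≤ v) (hvu : v ≤ u) (hp : 1 ≤ p) :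
    (u - v) ^ p ≤ u ^ p - v ^ p := by
  have h0 : (0:ℝ) ≤ u - v := by linarith
  have h := NNReal.add_rpow_le_rpow_add (⟨u - v, h0⟩ : ℝ≥0) (⟨v, hv⟩ : ℝ≥0) hp
  have h2 := NNReal.coe_le_coe.mpr h
  push_cast at h2
  change (u - v) ^ p + v ^ p ≤ (u - v + v) ^ p at h2
  simp only [sub_add_cancel] at h2
  linarith

private lemma key_pointwise {α a b c : ℝ} (hα1 : 1 < α) (ha : 0 ≤ a) (hb : 0 ≤ b)
    (hba : b ≤ a) (hc : a - b ≤ c) :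
    |a ^ (2/α) - b ^ (2/α)| ^ α ≤ c * (a + b) := by
  have hα0 : (0:ℝ) < α := lt_trans zero_lt_one hα1
  have hγ : (0:ℝ) ≤ 2/α := by positivity
  have hab : b ^ (2/α) ≤ a ^ (2/α) := Real.rpow_le_rpow hb hba hγ
  rw [abs_of_nonneg (sub_nonneg.2 hab)]
  have h1 : (a ^ (2/α) - b ^ (2/α)) ^ α ≤ (a ^ (2/α)) ^ α - (b ^ (2/α)) ^ α :=
    rpow_sub_le' (Real.rpow_nonneg hb _) hab hα1.le
  have h2 : (a ^ (2/α)) ^ α = a ^ (2:ℝ) := by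
    rw [← Real.rpow_mul ha, div_mul_cancel₀ _ (ne_of_gt hα0)]
  have h3 : (b ^ (2/α)) ^ α = b ^ (2:ℝ) := by
    rw [← Real.rpow_mul hb, div_mul_cancel₀ _ (ne_of_gt hα0)]
  rw [h2, h3] at h1
  rw [show (2:ℝ) = ((2:ℕ):ℝ) by norm_num, Real.rpow_natCast, Real.rpow_natCast] at h1
  nlinarith [mul_le_mul_of_nonneg_right hc (show (0:ℝ) ≤ a + b by linarith)]

/-- Key quantitative estimate from the proofs of Lemmas 3.3 and 3.5: for a measurable
set `Ω ⊆ ℝ²`, `1 < α < 2` and `w₁, w₂ ∈ L²(Ω)`, the functions `|wᵢ|^{2/α}` belong to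
`L^α(Ω)` and
`∫_Ω | |w₁|^{2/α} − |w₂|^{2/α} |^α dx ≤ ‖w₁ − w₂‖_{L²} (‖w₁‖_{L²} + ‖w₂‖_{L²})`. -/
theorem rpow_two_div_alpha_estimate
    (Ω : Set (EuclideanSpace ℝ (Fin 2))) (hΩ : MeasurableSet Ω)
    (α : ℝ) (hα1 : 1 < α) (hα2 : α < 2)
    (w₁ w₂ : EuclideanSpace ℝ (Fin 2) → ℝ)
    (h₁ : MemLp w₁ 2 (volume.restrict Ω)) (h₂ : MemLp w₂ 2 (volume.restrict Ω)) :
    MemLp (fun x => |w₁ x| ^ (2 / α)) (ENNReal.ofReal α) (volume.restrict Ω) ∧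
    MemLp (fun x => |w₂ x| ^ (2 / α)) (ENNReal.ofReal α) (volume.restrict Ω) ∧
    ∫ x in Ω, |(|w₁ x| ^ (2 / α) - |w₂ x| ^ (2 / α))| ^ α ≤
      (eLpNorm (fun x => w₁ x - w₂ x) 2 (volume.restrict Ω)).toReal *
        ((eLpNorm w₁ 2 (volume.restrict Ω)).toReal +
          (eLpNorm w₂ 2 (volume.restrict Ω)).toReal) := by
  set μ := volume.restrict Ω with hμ
  have hα0 : (0:ℝ) < α := lt_trans zero_lt_one hα1
  -- exponent arithmetic
  have hq : (2 : ℝ≥0∞) / ENNReal.ofReal (2/α) = ENNReal.ofReal α := by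
    rw [show (2:ℝ≥0∞) = ENNReal.ofReal 2 by simp,
      ← ENNReal.ofReal_div_of_pos (by positivity)]
    congr 1
    field_simp
  have hmem : ∀ w : EuclideanSpace ℝ (Fin 2) → ℝ, MemLp w 2 μ →
      MemLp (fun x => |w x| ^ (2/α)) (ENNReal.ofReal α) μ := by
    intro w hw
    have h := hw.norm_rpow_div (ENNReal.ofReal (2/α))
    rw [ENNReal.toReal_ofReal (by positivity), hq] at h
    simpa [Real.norm_eq_abs] using h
  refine ⟨hmem w₁ h₁, hmem w₂ h₂, ?_⟩
  -- the two auxiliary functions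
  set f : EuclideanSpace ℝ (Fin 2) → ℝ := fun x => |w₁ x - w₂ x| with hf
  set g : EuclideanSpace ℝ (Fin 2) → ℝ := fun x => |w₁ x| + |w₂ x| with hg
  have hfsub : MemLp (fun x => w₁ x - w₂ x) 2 μ := h₁.sub h₂
  have hf2 : MemLp f 2 μ := by simpa [hf, Real.norm_eq_abs] using hfsub.norm
  have ha1 : MemLp (fun x => |w₁ x|) 2 μ := by simpa [Real.norm_eq_abs] using h₁.norm
  have ha2 : MemLp (fun x => |w₂ x|) 2 μ := by simpa [Real.norm_eq_abs] using h₂.norm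
  have hg2 : MemLp g 2 μ := by exact ha1.add ha2
  have hint : Integrable (fun x => f x * g x) μ := by
    have h := hg2.smul (𝕜 := ℝ) hf2 (r := 1)
      (hpqr := ⟨by simp [one_div, ENNReal.inv_two_add_inv_two]⟩)
    rw [memLp_one_iff_integrable] at h
    exact h
  have hpoint : ∀ x, |(|w₁ x| ^ (2/α) - |w₂ x| ^ (2/α))| ^ α ≤ f x * g x := by
    intro x
    rcases le_total (|w₂ x|) (|w₁ x|) with h | h
    · exact key_pointwise hα1 (abs_nonneg _) (abs_nonneg _) h
        (le_trans (sub_le_iff_le_add.2 (by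
          have := abs_sub_abs_le_abs_sub (w₁ x) (w₂ x); linarith)) le_rfl)
    · have h' := key_pointwise hα1 (abs_nonneg _) (abs_nonneg _) h
        (show |w₂ x| - |w₁ x| ≤ f x by
          have := abs_sub_abs_le_abs_sub (w₂ x) (w₁ x)
          simp only [hf, abs_sub_comm (w₂ x) (w₁ x)] at this ⊢; linarith)
      calc |(|w₁ x| ^ (2/α) - |w₂ x| ^ (2/α))| ^ α
          = |(|w₂ x| ^ (2/α) - |w₁ x| ^ (2/α))| ^ α := by rw [abs_sub_comm]
        _ ≤ f x * (|w₂ x| + |w₁ x|) := h'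
        _ = f x * g x := by rw [hg]; ring
  have hmono : ∫ x in Ω, |(|w₁ x| ^ (2/α) - |w₂ x| ^ (2/α))| ^ α ≤ ∫ x, f x * g x ∂μ := by
    refine integral_mono_of_nonneg (Filter.Eventually.of_forall fun x => ?_) hint
      (Filter.Eventually.of_forall hpoint)
    exact Real.rpow_nonneg (abs_nonneg _) α
  have hcs : ∫ x, f x * g x ∂μ ≤
      (∫ x, f x ^ (2:ℝ) ∂μ) ^ (1/(2:ℝ)) * (∫ x, g x ^ (2:ℝ) ∂μ) ^ (1/(2:ℝ)) := by
    refine integral_mul_le_Lp_mul_Lq_of_nonneg ⟨by norm_num, by norm_num, by norm_num⟩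
      (Filter.Eventually.of_forall fun x => abs_nonneg _)
      (Filter.Eventually.of_forall fun x => by positivity) ?_ ?_
    · simpa [ENNReal.ofReal_ofNat] using hf2
    · simpa [ENNReal.ofReal_ofNat] using hg2
  have e1 : (∫ x, f x ^ (2:ℝ) ∂μ) ^ (1/(2:ℝ)) = (eLpNorm (fun x => w₁ x - w₂ x) 2 μ).toReal := by
    rw [hfsub.eLpNorm_eq_integral_rpow_norm two_ne_zero ENNReal.ofNat_ne_top,
      ENNReal.toReal_ofReal (Real.rpow_nonneg (integral_nonneg fun x => by positivity) _)]
    norm_num [Real.norm_eq_abs, hf]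
  have e2 : (∫ x, g x ^ (2:ℝ) ∂μ) ^ (1/(2:ℝ)) = (eLpNorm g 2 μ).toReal := by
    rw [hg2.eLpNorm_eq_integral_rpow_norm two_ne_zero ENNReal.ofNat_ne_top,
      ENNReal.toReal_ofReal (Real.rpow_nonneg (integral_nonneg fun x => by positivity) _)]
    have hng : ∀ x, ‖g x‖ = g x := fun x => Real.norm_of_nonneg (by positivity)
    norm_num [hng]
  have tri : (eLpNorm g 2 μ).toReal ≤ (eLpNorm w₁ 2 μ).toReal + (eLpNorm w₂ 2 μ).toReal := by
    have h4 : eLpNorm g 2 μ ≤ eLpNorm w₁ 2 μ + eLpNorm w₂ 2 μ := by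
      have h5 := eLpNorm_add_le (μ := μ) (p := 2) ha1.1 ha2.1 one_le_two
      have e3 : eLpNorm (fun x => |w₁ x|) 2 μ = eLpNorm w₁ 2 μ := by
        simp [← Real.norm_eq_abs, eLpNorm_norm]
      have e4 : eLpNorm (fun x => |w₂ x|) 2 μ = eLpNorm w₂ 2 μ := by
        simp [← Real.norm_eq_abs, eLpNorm_norm]
      calc eLpNorm g 2 μ = eLpNorm ((fun x => |w₁ x|) + fun x => |w₂ x|) 2 μ := rfl
        _ ≤ _ := h5
        _ = _ := by rw [e3, e4]
    calc (eLpNorm g 2 μ).toReal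
        ≤ (eLpNorm w₁ 2 μ + eLpNorm w₂ 2 μ).toReal :=
          ENNReal.toReal_mono (ENNReal.add_ne_top.2 ⟨h₁.2.ne, h₂.2.ne⟩) h4
      _ = _ := ENNReal.toReal_add h₁.2.ne h₂.2.ne
  calc ∫ x in Ω, |(|w₁ x| ^ (2/α) - |w₂ x| ^ (2/α))| ^ α
      ≤ ∫ x, f x * g x ∂μ := hmono
    _ ≤ (∫ x, f x ^ (2:ℝ) ∂μ) ^ (1/(2:ℝ)) * (∫ x, g x ^ (2:ℝ) ∂μ) ^ (1/(2:ℝ)) := hcs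
    _ = (eLpNorm (fun x => w₁ x - w₂ x) 2 μ).toReal * (eLpNorm g 2 μ).toReal := by rw [e1, e2]
    _ ≤ _ := mul_le_mul_of_nonneg_left tri ENNReal.toReal_nonneg
end

section
/- Let 1 < r < ∞. There exists a constant C = C(r) > 0 such that for all real numbers ξ and η, (|ξ|^{r−2}ξ − |η|^{r−2}η) · (ξ − η) ≥ C · ( |ξ|^{(r−2)/2}ξ − |η|^{(r−2)/2}η )². -/
open MeasureTheory intervalIntegral Set

lemma aux_intInt {p : ℝ} (hp : -1 < p) (a b : ℝ) :
    IntervalIntegrable (fun t : ℝ => |t| ^ p) volume a b := by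
  suffices H : ∀ c : ℝ, IntervalIntegrable (fun t : ℝ => |t| ^ p) volume 0 c by
    exact (H a).symm.trans (H b)
  have Hpos : ∀ c : ℝ, 0 ≤ c → IntervalIntegrable (fun t : ℝ => |t| ^ p) volume 0 c := by
    intro c hc
    have h := intervalIntegrable_rpow' (a := 0) (b := c) hp
    rw [intervalIntegrable_iff, uIoc_of_le hc] at h ⊢
    refine h.congr_fun ?_ measurableSet_Ioc
    intro x hx
    simp [abs_of_pos hx.1]
  intro c
  rcases le_total 0 c with hc | hc
  · exact Hpos c hc
  · rw [IntervalIntegrable.iff_comp_neg]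
    simpa using Hpos (-c) (by linarith)

lemma aux_int_zero {p : ℝ} (hp : -1 < p) (c : ℝ) :
    ∫ t in (0:ℝ)..c, |t| ^ p = |c| ^ p * c / (p + 1) := by
  have hp1 : p + 1 ≠ 0 := by linarith
  have Hpos : ∀ c : ℝ, 0 ≤ c → ∫ t in (0:ℝ)..c, |t| ^ p = |c| ^ p * c / (p + 1) := by
    intro c hc
    have h1 : ∫ t in (0:ℝ)..c, |t| ^ p = ∫ t in (0:ℝ)..c, t ^ p := by
      refine intervalIntegral.integral_congr ?_
      intro x hx
      rw [Set.uIcc_of_le hc] at hx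
      simp [abs_of_nonneg hx.1]
    rw [h1, integral_rpow (Or.inl hp), Real.zero_rpow hp1, abs_of_nonneg hc]
    rcases eq_or_lt_of_le hc with h | h
    · simp [← h, Real.zero_rpow hp1]
    · rw [Real.rpow_add_one h.ne']
      ring
  rcases le_total 0 c with hc | hc
  · exact Hpos c hc
  · have h2 : ∫ t in (0:ℝ)..(-c), |(-t)| ^ p = ∫ t in (c:ℝ)..0, |t| ^ p := by
      simpa using intervalIntegral.integral_comp_neg (a := 0) (b := -c) (fun t => |t| ^ p)
    have h3 : ∫ t in (0:ℝ)..(-c), |(-t)| ^ p = |c| ^ p * (-c) / (p + 1) := by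
      simp only [abs_neg]
      simpa using Hpos (-c) (by linarith)
    have h4 : ∫ t in (0:ℝ)..c, |t| ^ p = - ∫ t in (c:ℝ)..0, |t| ^ p :=
      (intervalIntegral.integral_symm _ _)
    rw [h4, ← h2, h3]
    ring

lemma aux_int {p : ℝ} (hp : -1 < p) (a b : ℝ) :
    ∫ t in a..b, |t| ^ p = (|b| ^ p * b - |a| ^ p * a) / (p + 1) := by
  rw [← intervalIntegral.integral_add_adjacent_intervals (aux_intInt hp a 0) (aux_intInt hp 0 b),
    intervalIntegral.integral_symm, aux_int_zero hp, aux_int_zero hp]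
  ring

lemma aux_cs {a b : ℝ} (hab : a ≤ b) {f : ℝ → ℝ}
    (h1 : IntervalIntegrable f volume a b)
    (h2 : IntervalIntegrable (fun t => f t ^ 2) volume a b) :
    (∫ t in a..b, f t) ^ 2 ≤ (b - a) * ∫ t in a..b, f t ^ 2 := by
  rcases eq_or_lt_of_le hab with h | h
  · simp [← h]
  · set I1 := ∫ t in a..b, f t with hI1
    set I2 := ∫ t in a..b, f t ^ 2 with hI2
    set c := I1 / (b - a) with hc
    have hba : (0:ℝ) < b - a := by linarith
    have hcI : c * (b - a) = I1 := by rw [hc]; field_simp [hba.ne']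
    have h0 : 0 ≤ ∫ t in a..b, (f t - c) ^ 2 :=
      intervalIntegral.integral_nonneg hab (fun t _ => sq_nonneg _)
    have hexp : ∫ t in a..b, (f t - c) ^ 2 = I2 - 2 * c * I1 + (b - a) * c ^ 2 := by
      have heq : ∀ t, (f t - c) ^ 2 = (f t ^ 2 - (2 * c) * f t) + c ^ 2 := by
        intro t; ring
      simp_rw [heq]
      rw [intervalIntegral.integral_add (h2.sub (h1.const_mul (2 * c)))
        intervalIntegrable_const,
        intervalIntegral.integral_sub h2 (h1.const_mul (2 * c)),
        intervalIntegral.integral_const_mul, intervalIntegral.integral_const,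
        smul_eq_mul]

    rw [hexp] at h0
    nlinarith [sq_nonneg (I2 - c ^ 2 * (b - a))]

lemma aux_key {r : ℝ} (hr : 1 < r) {ξ η : ℝ} (hle : η ≤ ξ) :
    4 * (r - 1) / r ^ 2 * (|ξ| ^ ((r - 2) / 2) * ξ - |η| ^ ((r - 2) / 2) * η) ^ 2 ≤
      (|ξ| ^ (r - 2) * ξ - |η| ^ (r - 2) * η) * (ξ - η) := by
  have hr0 : (0:ℝ) < r := by linarith
  have hp1 : (-1:ℝ) < (r - 2) / 2 := by linarith
  have hp2 : (-1:ℝ) < r - 2 := by linarith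
  have hsq : ∀ t : ℝ, (|t| ^ ((r - 2) / 2)) ^ 2 = |t| ^ (r - 2) := by
    intro t
    rw [← Real.rpow_natCast (|t| ^ ((r - 2) / 2)) 2, ← Real.rpow_mul (abs_nonneg t)]
    norm_num
  set I1 := ∫ t in η..ξ, |t| ^ ((r - 2) / 2) with hI1
  set I2 := ∫ t in η..ξ, |t| ^ (r - 2) with hI2
  have cs : I1 ^ 2 ≤ (ξ - η) * I2 := by
    have hfe : (fun t : ℝ => (|t| ^ ((r - 2) / 2)) ^ 2) = fun t : ℝ => |t| ^ (r - 2) :=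
      funext hsq
    have h2 : IntervalIntegrable (fun t : ℝ => (|t| ^ ((r - 2) / 2)) ^ 2) volume η ξ := by
      rw [hfe]; exact aux_intInt hp2 η ξ
    have h := aux_cs hle (aux_intInt hp1 η ξ) h2
    rwa [show (∫ t in η..ξ, (|t| ^ ((r - 2) / 2)) ^ 2) = I2 from
      intervalIntegral.integral_congr (fun t _ => hsq t)] at h
  have hne1 : (r - 2) / 2 + 1 ≠ 0 := ne_of_gt (by linarith)
  have hne2 : r - 2 + 1 ≠ 0 := ne_of_gt (by linarith)
  have e1 : |ξ| ^ ((r - 2) / 2) * ξ - |η| ^ ((r - 2) / 2) * η = (r / 2) * I1 := by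
    rw [hI1, aux_int hp1]
    field_simp
    have hr' : r * r⁻¹ = 1 := mul_inv_cancel₀ hr0.ne'
    linear_combination (-(|ξ| ^ ((r - 2) / 2) * ξ) + |η| ^ ((r - 2) / 2) * η) * hr'
  have e2 : |ξ| ^ (r - 2) * ξ - |η| ^ (r - 2) * η = (r - 1) * I2 := by
    rw [hI2, aux_int hp2]
    field_simp
    ring
  rw [e1, e2]
  have hrw : 4 * (r - 1) / r ^ 2 * ((r / 2) * I1) ^ 2 = (r - 1) * I1 ^ 2 := by
    field_simp
    ring
  rw [hrw]
  have key : (r - 1) * I1 ^ 2 ≤ (r - 1) * ((ξ - η) * I2) :=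
    mul_le_mul_of_nonneg_left cs (by linarith)
  nlinarith [key]

/-- **Lemma 3.7, second inequality (Lemma 1.1 of Raviart, due to Simon).** For
`1 < r < ∞` there is a constant `C = C(r) > 0` such that for all real `ξ, η`,
`(|ξ|^{r−2}ξ − |η|^{r−2}η)(ξ − η) ≥ C(|ξ|^{(r−2)/2}ξ − |η|^{(r−2)/2}η)²`. -/
theorem raviart_second_inequality (r : ℝ) (hr : 1 < r) :
    ∃ C > (0 : ℝ), ∀ ξ η : ℝ,
      C * (|ξ| ^ ((r - 2) / 2) * ξ - |η| ^ ((r - 2) / 2) * η) ^ 2 ≤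
        (|ξ| ^ (r - 2) * ξ - |η| ^ (r - 2) * η) * (ξ - η) := by
  refine ⟨4 * (r - 1) / r ^ 2, ?_, ?_⟩
  · apply div_pos (by linarith) (by positivity)
  · intro ξ η
    rcases le_total η ξ with h | h
    · exact aux_key hr h
    · have h2 := aux_key hr h
      calc 4 * (r - 1) / r ^ 2 * (|ξ| ^ ((r - 2) / 2) * ξ - |η| ^ ((r - 2) / 2) * η) ^ 2
          = 4 * (r - 1) / r ^ 2 * (|η| ^ ((r - 2) / 2) * η - |ξ| ^ ((r - 2) / 2) * ξ) ^ 2 := by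
            ring
        _ ≤ (|η| ^ (r - 2) * η - |ξ| ^ (r - 2) * ξ) * (η - ξ) := h2
        _ = (|ξ| ^ (r - 2) * ξ - |η| ^ (r - 2) * η) * (ξ - η) := by ring
end
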